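/- Let 𝓕^t, t ∈ Ω, be a parametrized family of C^1 IFSs on a common compact Z ⊂ ℝ^d satisfying conditions (C1) and (C2) and the generalized transversality condition (GTC) with respect to a locally finite Borel measure η on Ω, with associated constants δ_0 and function ψ. Let s be non-integral with 0 < s < d, let t_0 ∈ Ω and 0 < δ < δ_0. Then there is a constant c > 0, depending on s and δ (and t_0), such that for all distinct i, j ∈ Σ: ∫_{B(t_0,δ)} |Π^t(i) − Π^t(j)|^{−s} dη(t) ≤ c e^{|i∧j| ψ(δ)} ( max_{x∈Σ} φ^s(D_{Π^{t_0} x} f^{t_0}_{i∧j}) )^{−1}. -/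

import Mathlib

open MeasureTheory Filter Set Metric
open scoped Topology ENNReal NNReal Matrix

noncomputable section

namespace IFSPaper

/-- `ℝ^d` with the Euclidean norm. -/
abbrev Euc (d : ℕ) : Type := EuclideanSpace ℝ (Fin d)

/-- The symbolic space `Σ = {1,…,ℓ}^ℕ`. -/
abbrev Seq (ℓ : ℕ) : Type := ℕ → Fin ℓ

abbrev Mat (d : ℕ) : Type := Matrix (Fin d) (Fin d) ℝ

/-- The left shift map `σ` on `Σ`. -/
def shiftMap {ℓ : ℕ} (x : Seq ℓ) : Seq ℓ := fun k => x (k + 1)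

/-- The initial word `x|n` of a sequence `x`. -/
def prefixWord {ℓ : ℕ} (x : Seq ℓ) (n : ℕ) : List (Fin ℓ) := List.ofFn fun k : Fin n => x k

/-- For a word `I = i₁…iₙ`, the composition `f_I = f_{i₁} ∘ ⋯ ∘ f_{iₙ}`. -/
def wordComp {ℓ : ℕ} {α : Type*} (f : Fin ℓ → α → α) : List (Fin ℓ) → α → α
  | [] => id
  | i :: w => f i ∘ wordComp f w

/-- The Jacobian matrix of `f_I` at `y`, computed from the Jacobians `Df` of the
individual maps via the chain rule. -/
def wordDeriv {ℓ d : ℕ} (f : Fin ℓ → Euc d → Euc d) (Df : Fin ℓ → Euc d → Mat d) :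
    List (Fin ℓ) → Euc d → Mat d
  | [], _ => 1
  | i :: w, y => Df i (wordComp f w y) * wordDeriv f Df w y

/-- The coding map `Π(x) = lim_n f_{x₁} ∘ ⋯ ∘ f_{xₙ} (0)` of an IFS. -/
def codingMap {ℓ d : ℕ} (f : Fin ℓ → Euc d → Euc d) (x : Seq ℓ) : Euc d :=
  limUnder atTop fun n => wordComp f (prefixWord x n) 0

/-- The singular values `α₁(A) ≥ α₂(A) ≥ … ≥ α_d(A)` of a `d × d` real matrix, in
decreasing order (indexed from `0`). -/
def singVals {d : ℕ} (A : Mat d) : Fin d → ℝ := fun k =>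
  let v : Fin d → ℝ := fun m =>
    Real.sqrt ((show (Aᵀ * A).IsHermitian from Matrix.isHermitian_conjTranspose_mul_self A).eigenvalues m)
  v (Tuple.sort v k.rev)

/-- The singular value function `φ^s(A)`. -/
def svf {d : ℕ} (s : ℝ) (A : Mat d) : ℝ :=
  if s < (d : ℝ) then
    ∏ k : Fin d,
      (if (k : ℕ) < ⌊s⌋₊ then singVals A k
       else if (k : ℕ) = ⌊s⌋₊ then singVals A k ^ (s - (⌊s⌋₊ : ℝ)) else 1)
  else |A.det| ^ (s / (d : ℝ))

/-- A matrix viewed as a continuous linear map on Euclidean space. -/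
def matCLM {d : ℕ} (A : Mat d) : Euc d →L[ℝ] Euc d := Matrix.toEuclideanCLM (𝕜 := ℝ) A

/-- The operator norm of a matrix (= its largest singular value). -/
def opNorm {d : ℕ} (A : Mat d) : ℝ := ‖matCLM A‖

/-- The quantity `Z^t_ω(r) = inf_{x ∈ Σ} min_{0 ≤ k ≤ d} r^k / φ^k(D_{Π x} f_ω)`. -/
def Zfun {ℓ d : ℕ} (f : Fin ℓ → Euc d → Euc d) (Df : Fin ℓ → Euc d → Mat d)
    (w : List (Fin ℓ)) (r : ℝ) : ℝ :=
  ⨅ x : Seq ℓ, ⨅ k : Fin (d + 1),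
    r ^ (k : ℕ) / svf ((k : ℕ) : ℝ) (wordDeriv f Df w (codingMap f x))

/-- The length `|i ∧ j|` of the common initial word of two sequences. -/
def commonLen {ℓ : ℕ} (i j : Seq ℓ) : ℕ := sInf {n | i n ≠ j n}

/-- The common initial word `i ∧ j` of two sequences. -/
def commonWord {ℓ : ℕ} (i j : Seq ℓ) : List (Fin ℓ) :=
  List.ofFn fun k : Fin (commonLen i j) => i k

/-- The generalized transversality condition for the parametrized family `F` of IFSs with
Jacobians `DF`, with parameters ranging in `Δ`, w.r.t. the measure `η`, witnessed by the
constant `δ₀` and the function `ψ`. -/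
def GTCWith {ℓ d : ℕ} {Ω : Type*} [PseudoMetricSpace Ω] [MeasurableSpace Ω]
    (F : Ω → Fin ℓ → Euc d → Euc d) (DF : Ω → Fin ℓ → Euc d → Mat d)
    (Δ : Set Ω) (η : Measure Ω) (δ₀ : ℝ) (ψ : ℝ → ℝ) : Prop :=
  0 < δ₀ ∧ (∀ δ ∈ Ioo (0 : ℝ) δ₀, 0 ≤ ψ δ) ∧
    Tendsto ψ (𝓝[>] (0 : ℝ)) (𝓝 0) ∧
    ∀ t₀ ∈ Δ, ∀ δ ∈ Ioo (0 : ℝ) δ₀, ∃ C : ℝ, 0 < C ∧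
      ∀ i j : Seq ℓ, i ≠ j → ∀ r : ℝ, 0 < r →
        η {t | t ∈ closedBall t₀ δ ∧
            dist (codingMap (F t) i) (codingMap (F t) j) < r} ≤
          ENNReal.ofReal (C * Real.exp ((commonLen i j : ℝ) * ψ δ) *
            Zfun (F t₀) (DF t₀) (commonWord i j) r)

/-- The generalized transversality condition (GTC). -/
def SatisfiesGTC {ℓ d : ℕ} {Ω : Type*} [PseudoMetricSpace Ω] [MeasurableSpace Ω]
    (F : Ω → Fin ℓ → Euc d → Euc d) (DF : Ω → Fin ℓ → Euc d → Mat d)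
    (Δ : Set Ω) (η : Measure Ω) : Prop :=
  ∃ δ₀ ψ, GTCWith F DF Δ η δ₀ ψ

/-- The conditions for `f` (with Jacobians `Df`) to be a `C¹` IFS on the compact set `Z`:
each map sends `Z` into itself and extends to a contracting `C¹` diffeomorphism of the
open set `U ⊇ Z` into itself. -/
def IsC1IFS {ℓ d : ℕ} (Z U : Set (Euc d)) (f : Fin ℓ → Euc d → Euc d)
    (Df : Fin ℓ → Euc d → Mat d) : Prop :=
  IsCompact Z ∧ Z.Nonempty ∧ IsOpen U ∧ Z ⊆ U ∧
  ∀ i : Fin ℓ,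
    MapsTo (f i) Z Z ∧ MapsTo (f i) U U ∧ InjOn (f i) U ∧
    (∀ x ∈ U, HasFDerivAt (f i) (matCLM (Df i x)) x) ∧
    ContinuousOn (fun x => matCLM (Df i x)) U ∧
    (∀ x ∈ U, IsUnit (Df i x).det) ∧
    ∃ ρ : ℝ, ρ < 1 ∧ ∀ x ∈ U, opNorm (Df i x) ≤ ρ

section Aux

variable {d ℓ : ℕ}

lemma singVals_nonneg (A : Mat d) (k : Fin d) : 0 ≤ singVals A k := Real.sqrt_nonneg _

lemma opNorm_nonneg (A : Mat d) : 0 ≤ opNorm A := norm_nonneg _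

lemma opNorm_mul_le (A B : Mat d) : opNorm (A * B) ≤ opNorm A * opNorm B := by
  unfold opNorm matCLM; rw [map_mul]; exact norm_mul_le _ _

lemma opNorm_one (hd : 0 < d) : opNorm (1 : Mat d) = 1 := by
  haveI : Nonempty (Fin d) := ⟨⟨0, hd⟩⟩
  haveI : Nontrivial (Euc d) := inferInstance
  unfold opNorm matCLM; rw [map_one]; exact norm_one

set_option synthInstance.maxHeartbeats 400000 in
lemma eigenvalues_le_sq_opNorm (A : Mat d) (j : Fin d) :
    (show (Aᵀ * A).IsHermitian from Matrix.isHermitian_conjTranspose_mul_self A).eigenvalues j ≤ opNorm A ^ 2 := by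
  set hH := (show (Aᵀ * A).IsHermitian from Matrix.isHermitian_conjTranspose_mul_self A)
  set v : Euc d := hH.eigenvectorBasis j with hvdef
  have hv1 : ‖v‖ = 1 := hH.eigenvectorBasis.orthonormal.1 j
  have hmv : (Aᴴ * A) *ᵥ ⇑(hH.eigenvectorBasis j) = hH.eigenvalues j • ⇑(hH.eigenvectorBasis j) :=
    hH.mulVec_eigenvectorBasis j
  have hclm : matCLM (Aᴴ * A) v = hH.eigenvalues j • v := by
    apply WithLp.ofLp_injective
    unfold matCLM
    rw [Matrix.ofLp_toEuclideanCLM]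
    simpa using hmv
  have h1 : |hH.eigenvalues j| = ‖matCLM (Aᴴ * A) v‖ := by
    rw [hclm, norm_smul, hv1, mul_one, Real.norm_eq_abs]
  have h2 : ‖matCLM (Aᴴ * A) v‖ ≤ ‖matCLM (Aᴴ * A)‖ := by
    calc ‖matCLM (Aᴴ * A) v‖ ≤ ‖matCLM (Aᴴ * A)‖ * ‖v‖ := (matCLM (Aᴴ * A)).le_opNorm v
    _ = ‖matCLM (Aᴴ * A)‖ := by rw [hv1, mul_one]
  have h3 : ‖matCLM (Aᴴ * A)‖ ≤ opNorm A ^ 2 := by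
    unfold opNorm matCLM
    rw [map_mul, ← Matrix.star_eq_conjTranspose, map_star]
    have h5 := CStarRing.norm_star_mul_self (x := Matrix.toEuclideanCLM (𝕜 := ℝ) A)
    rw [h5, sq]
  calc hH.eigenvalues j ≤ |hH.eigenvalues j| := le_abs_self _
    _ ≤ opNorm A ^ 2 := h1 ▸ h2.trans h3

lemma singVals_le_opNorm (A : Mat d) (k : Fin d) : singVals A k ≤ opNorm A := by
  unfold singVals
  calc Real.sqrt _ ≤ Real.sqrt (opNorm A ^ 2) :=
        Real.sqrt_le_sqrt (eigenvalues_le_sq_opNorm A _)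
    _ = opNorm A := Real.sqrt_sq (opNorm_nonneg A)

lemma prod_singVals (A : Mat d) : ∏ k, singVals A k = |A.det| := by
  set hH := (show (Aᵀ * A).IsHermitian from Matrix.isHermitian_conjTranspose_mul_self A) with hHdef
  set v : Fin d → ℝ := fun m => Real.sqrt (hH.eigenvalues m) with hv
  have h2 : ∏ k : Fin d, singVals A k = ∏ k, v k := by
    have := Equiv.prod_comp (Fin.revPerm.trans (Tuple.sort v)) v
    simpa [singVals] using this
  have hnn : ∀ m, 0 ≤ hH.eigenvalues m := fun m =>
    Matrix.eigenvalues_conjTranspose_mul_self_nonneg A m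
  have h4 : 0 ≤ ∏ k, v k := Finset.prod_nonneg fun k _ => Real.sqrt_nonneg _
  have h3 : (∏ k, v k) ^ 2 = A.det ^ 2 := by
    rw [← Finset.prod_pow]
    have : ∀ k : Fin d, v k ^ 2 = hH.eigenvalues k := fun k => Real.sq_sqrt (hnn k)
    rw [Finset.prod_congr rfl fun k _ => this k]
    have hdet : (Aᴴ * A).det = ∏ i, hH.eigenvalues i := by
      simpa using hH.det_eq_prod_eigenvalues
    rw [← hdet, Matrix.det_mul, Matrix.det_conjTranspose, star_trivial]
    ring
  rw [h2, ← Real.sqrt_sq h4, h3, Real.sqrt_sq_eq_abs]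

end Aux
section Aux2

variable {d ℓ : ℕ}

lemma svf_nonneg (s : ℝ) (A : Mat d) : 0 ≤ svf s A := by
  unfold svf
  split
  · apply Finset.prod_nonneg
    intro j _
    split
    · exact singVals_nonneg A j
    · split
      · exact Real.rpow_nonneg (singVals_nonneg A j) _
      · exact zero_le_one
  · exact Real.rpow_nonneg (abs_nonneg _) _

lemma svf_natCast (A : Mat d) (m : ℕ) (hd : 0 < d) (hm : m ≤ d) :
    svf (m : ℝ) A = ∏ j : Fin d, (if (j : ℕ) < m then singVals A j else 1) := by
  rcases lt_or_eq_of_le hm with hmd | hmd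
  · unfold svf
    rw [if_pos (by exact_mod_cast hmd)]
    apply Finset.prod_congr rfl
    intro j _
    rw [Nat.floor_natCast]
    by_cases h1 : (j : ℕ) < m
    · rw [if_pos h1, if_pos h1]
    · rw [if_neg h1, if_neg h1]
      by_cases h2 : (j : ℕ) = m
      · rw [if_pos h2, sub_self, Real.rpow_zero]
      · rw [if_neg h2]
  · subst hmd
    unfold svf
    rw [if_neg (lt_irrefl _)]
    rw [div_self (by exact_mod_cast hd.ne' : (m : ℝ) ≠ 0), Real.rpow_one]
    rw [← prod_singVals A]
    apply Finset.prod_congr rfl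
    intro j _
    rw [if_pos j.isLt]

lemma svf_succ (A : Mat d) (hd : 0 < d) (k : ℕ) (hk : k < d) :
    svf ((k + 1 : ℕ) : ℝ) A = svf (k : ℝ) A * singVals A ⟨k, hk⟩ := by
  rw [svf_natCast A (k+1) hd (by omega), svf_natCast A k hd (by omega)]
  have hP : (∏ x ∈ Finset.univ.erase (⟨k, hk⟩ : Fin d),
        (if (x : ℕ) < k + 1 then singVals A x else 1))
      = ∏ x ∈ Finset.univ.erase (⟨k, hk⟩ : Fin d),
        (if (x : ℕ) < k then singVals A x else 1) := by
    apply Finset.prod_congr rfl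
    intro j hj
    have hjk : (j : ℕ) ≠ k := fun h => Finset.ne_of_mem_erase hj (Fin.ext h)
    by_cases h1 : (j : ℕ) < k
    · rw [if_pos h1, if_pos (by omega)]
    · rw [if_neg h1, if_neg (by omega)]
  rw [← Finset.mul_prod_erase Finset.univ _ (Finset.mem_univ (⟨k, hk⟩ : Fin d)),
      ← Finset.mul_prod_erase Finset.univ
        (fun j : Fin d => if (j : ℕ) < k then singVals A j else 1)
        (Finset.mem_univ (⟨k, hk⟩ : Fin d)), hP]
  have e1 : ((⟨k, hk⟩ : Fin d) : ℕ) = k := rfl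
  rw [if_pos (by omega : ((⟨k, hk⟩ : Fin d) : ℕ) < k + 1),
      if_neg (by omega : ¬ ((⟨k, hk⟩ : Fin d) : ℕ) < k)]
  ring

lemma svf_split (A : Mat d) {s : ℝ} (hs : 0 < s) (hsd : s < d) (hk : ⌊s⌋₊ < d) :
    svf s A = svf ((⌊s⌋₊ : ℕ) : ℝ) A * singVals A ⟨⌊s⌋₊, hk⟩ ^ (s - (⌊s⌋₊ : ℝ)) := by
  rw [svf_natCast A ⌊s⌋₊ (by omega) (by omega)]
  unfold svf
  rw [if_pos hsd]
  have hP : (∏ x ∈ Finset.univ.erase (⟨⌊s⌋₊, hk⟩ : Fin d),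
        (if (x : ℕ) < ⌊s⌋₊ then singVals A x
          else if (x : ℕ) = ⌊s⌋₊ then singVals A x ^ (s - (⌊s⌋₊ : ℝ)) else 1))
      = ∏ x ∈ Finset.univ.erase (⟨⌊s⌋₊, hk⟩ : Fin d),
        (if (x : ℕ) < ⌊s⌋₊ then singVals A x else 1) := by
    apply Finset.prod_congr rfl
    intro j hj
    have hjk : (j : ℕ) ≠ ⌊s⌋₊ := fun h => Finset.ne_of_mem_erase hj (Fin.ext h)
    by_cases h1 : (j : ℕ) < ⌊s⌋₊
    · rw [if_pos h1, if_pos h1]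
    · rw [if_neg h1, if_neg h1, if_neg hjk]
  rw [← Finset.mul_prod_erase Finset.univ _ (Finset.mem_univ (⟨⌊s⌋₊, hk⟩ : Fin d)),
      ← Finset.mul_prod_erase Finset.univ
        (fun j : Fin d => if (j : ℕ) < ⌊s⌋₊ then singVals A j else 1)
        (Finset.mem_univ (⟨⌊s⌋₊, hk⟩ : Fin d)), hP]
  rw [if_neg (by simp : ¬ ((⟨⌊s⌋₊, hk⟩ : Fin d) : ℕ) < ⌊s⌋₊),
      if_pos (rfl : ((⟨⌊s⌋₊, hk⟩ : Fin d) : ℕ) = ⌊s⌋₊),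
      if_neg (by simp : ¬ ((⟨⌊s⌋₊, hk⟩ : Fin d) : ℕ) < ⌊s⌋₊)]
  ring

lemma svf_le_one {s : ℝ} (hs : 0 ≤ s) (A : Mat d) (hA : opNorm A ≤ 1) : svf s A ≤ 1 := by
  unfold svf
  have hsv : ∀ j : Fin d, singVals A j ≤ 1 := fun j => (singVals_le_opNorm A j).trans hA
  have hone : ∏ _j : Fin d, (1:ℝ) = 1 := by simp
  split
  · refine le_trans ?_ hone.le
    apply Finset.prod_le_prod
    · intro j _
      split
      · exact singVals_nonneg A j
      · split
        · exact Real.rpow_nonneg (singVals_nonneg A j) _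
        · exact zero_le_one
    · intro j _
      split
      · exact hsv j
      · split
        · exact Real.rpow_le_one (singVals_nonneg A j) (hsv j)
            (by linarith [Nat.floor_le hs])
        · exact le_rfl
  · apply Real.rpow_le_one (abs_nonneg _) ?_ (by positivity)
    rw [← prod_singVals A]
    calc ∏ j, singVals A j ≤ ∏ _j : Fin d, 1 :=
        Finset.prod_le_prod (fun j _ => singVals_nonneg A j) (fun j _ => hsv j)
      _ = 1 := hone

end Aux2
section Aux3

variable {d ℓ : ℕ}

lemma Zfun_le (f : Fin ℓ → Euc d → Euc d) (Df : Fin ℓ → Euc d → Mat d)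
    (w : List (Fin ℓ)) {r : ℝ} (hr : 0 ≤ r) (x : Seq ℓ) (m : Fin (d + 1)) :
    Zfun f Df w r ≤ r ^ (m : ℕ) / svf ((m : ℕ) : ℝ) (wordDeriv f Df w (codingMap f x)) := by
  unfold Zfun
  have hnn : ∀ (y : Seq ℓ) (k : Fin (d+1)),
      0 ≤ r ^ (k : ℕ) / svf ((k : ℕ) : ℝ) (wordDeriv f Df w (codingMap f y)) :=
    fun y k => div_nonneg (pow_nonneg hr _) (svf_nonneg _ _)
  refine le_trans (ciInf_le ?_ x) (ciInf_le (Finite.bddBelow_range _) m)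
  refine ⟨0, ?_⟩
  rintro z ⟨y, rfl⟩
  exact Real.iInf_nonneg (hnn y)

lemma wordComp_mapsTo {Z : Set (Euc d)} {f : Fin ℓ → Euc d → Euc d}
    (h : ∀ i, MapsTo (f i) Z Z) (w : List (Fin ℓ)) : MapsTo (wordComp f w) Z Z := by
  induction w with
  | nil => exact fun x hx => hx
  | cons i w ih => exact (h i).comp ih

lemma dist_wordComp_le {Z : Set (Euc d)} {f : Fin ℓ → Euc d → Euc d} {θ : ℝ} (hθ0 : 0 ≤ θ)
    (hmaps : ∀ i, MapsTo (f i) Z Z)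
    (hlip : ∀ i, ∀ x ∈ Z, ∀ y ∈ Z, dist (f i x) (f i y) ≤ θ * dist x y) (w : List (Fin ℓ)) :
    ∀ y ∈ Z, ∀ z ∈ Z, dist (wordComp f w y) (wordComp f w z) ≤ θ ^ w.length * dist y z := by
  induction w with
  | nil => intro y _ z _; simp [wordComp]
  | cons i w ih =>
    intro y hy z hz
    have h1 : dist (wordComp f (i :: w) y) (wordComp f (i :: w) z)
        ≤ θ * dist (wordComp f w y) (wordComp f w z) :=
      hlip i _ (wordComp_mapsTo hmaps w hy) _ (wordComp_mapsTo hmaps w hz)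
    calc dist (wordComp f (i :: w) y) (wordComp f (i :: w) z)
        ≤ θ * dist (wordComp f w y) (wordComp f w z) := h1
      _ ≤ θ * (θ ^ w.length * dist y z) :=
        mul_le_mul_of_nonneg_left (ih y hy z hz) hθ0
      _ = θ ^ (i :: w).length * dist y z := by rw [List.length_cons, pow_succ]; ring

lemma wordComp_append (f : Fin ℓ → Euc d → Euc d) (w₁ w₂ : List (Fin ℓ)) :
    wordComp f (w₁ ++ w₂) = wordComp f w₁ ∘ wordComp f w₂ := by
  induction w₁ with
  | nil => rfl
  | cons i w ih => show f i ∘ wordComp f (w ++ w₂) = _; rw [ih]; rfl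

lemma shift_iterate (x : Seq ℓ) (n k : ℕ) : (shiftMap^[n] x) k = x (n + k) := by
  induction n generalizing x with
  | zero => simp
  | succ n ih =>
    rw [Function.iterate_succ_apply, ih (shiftMap x)]
    show x (n + k + 1) = x (n + 1 + k)
    congr 1
    omega

lemma prefixWord_append (x : Seq ℓ) (n m : ℕ) :
    prefixWord x (n + m) = prefixWord x n ++ prefixWord (shiftMap^[n] x) m := by
  unfold prefixWord
  rw [List.ofFn_add]
  congr 1
  exact congrArg List.ofFn (funext fun k => (shift_iterate x n k).symm)

lemma opNorm_wordDeriv_le {Z U : Set (Euc d)} {f : Fin ℓ → Euc d → Euc d}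
    {Df : Fin ℓ → Euc d → Mat d} (hd : 0 < d) (hZU : Z ⊆ U)
    (hmaps : ∀ i, MapsTo (f i) Z Z)
    (hDf : ∀ i, ∀ x ∈ U, opNorm (Df i x) ≤ 1) (w : List (Fin ℓ)) :
    ∀ y ∈ Z, opNorm (wordDeriv f Df w y) ≤ 1 := by
  induction w with
  | nil => intro y _; exact le_of_eq (opNorm_one hd)
  | cons i w ih =>
    intro y hy
    have h1 := opNorm_mul_le (Df i (wordComp f w y)) (wordDeriv f Df w y)
    have h2 : opNorm (Df i (wordComp f w y)) ≤ 1 :=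
      hDf i _ (hZU (wordComp_mapsTo hmaps w hy))
    have h3 := ih y hy
    have h4 := opNorm_nonneg (wordDeriv f Df w y)
    have h5 := opNorm_nonneg (Df i (wordComp f w y))
    show opNorm (Df i (wordComp f w y) * wordDeriv f Df w y) ≤ 1
    nlinarith

end Aux3
section Aux4

variable {d ℓ : ℕ}

lemma continuousAt_wordComp {Z U : Set (Euc d)} {f : Fin ℓ → Euc d → Euc d}
    {Df : Fin ℓ → Euc d → Mat d}
    (hZU : Z ⊆ U) (hmaps : ∀ i, MapsTo (f i) Z Z)
    (hder : ∀ i, ∀ x ∈ U, HasFDerivAt (f i) (matCLM (Df i x)) x)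
    (w : List (Fin ℓ)) {p : Euc d} (hp : p ∈ Z) : ContinuousAt (wordComp f w) p := by
  induction w with
  | nil => exact continuousAt_id
  | cons i w ih =>
    have h1 : wordComp f w p ∈ Z := wordComp_mapsTo hmaps w hp
    have h2 : ContinuousAt (f i) (wordComp f w p) :=
      (hder i _ (hZU h1)).continuousAt
    exact h2.comp ih

lemma codingMap_iterate {Z U : Set (Euc d)} {f : Fin ℓ → Euc d → Euc d}
    {Df : Fin ℓ → Euc d → Mat d}
    (hZU : Z ⊆ U) (hmaps : ∀ i, MapsTo (f i) Z Z)
    (hder : ∀ i, ∀ x ∈ U, HasFDerivAt (f i) (matCLM (Df i x)) x)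
    (hPi1 : ∀ x : Seq ℓ, codingMap f x ∈ Z)
    (hPi2 : ∀ x : Seq ℓ,
      Tendsto (fun n => wordComp f (prefixWord x n) 0) atTop (𝓝 (codingMap f x)))
    (x : Seq ℓ) (n : ℕ) :
    codingMap f x = wordComp f (prefixWord x n) (codingMap f (shiftMap^[n] x)) := by
  have hc : ContinuousAt (wordComp f (prefixWord x n)) (codingMap f (shiftMap^[n] x)) :=
    continuousAt_wordComp hZU hmaps hder _ (hPi1 _)
  have h1 : Tendsto (fun m => wordComp f (prefixWord x n)
      (wordComp f (prefixWord (shiftMap^[n] x) m) 0)) atTop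
      (𝓝 (wordComp f (prefixWord x n) (codingMap f (shiftMap^[n] x)))) :=
    hc.tendsto.comp (hPi2 _)
  have h2 : ∀ m, wordComp f (prefixWord x n) (wordComp f (prefixWord (shiftMap^[n] x) m) 0)
      = wordComp f (prefixWord x (n + m)) 0 := by
    intro m
    rw [prefixWord_append, wordComp_append]
    rfl
  have h1' : Tendsto (fun m => wordComp f (prefixWord x (n + m)) 0) atTop
      (𝓝 (wordComp f (prefixWord x n) (codingMap f (shiftMap^[n] x)))) :=
    h1.congr h2
  have h3 : Tendsto (fun m => wordComp f (prefixWord x (n + m)) 0) atTop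
      (𝓝 (codingMap f x)) := by
    have h4 := (hPi2 x).comp (tendsto_add_atTop_nat n)
    refine h4.congr fun m => ?_
    simp [Function.comp, Nat.add_comm]
  exact tendsto_nhds_unique h3 h1'

variable {Ω : Type*} [MetricSpace Ω]

lemma continuous_param_comp {Z : Set (Euc d)}
    {F : Ω → Fin ℓ → Euc d → Euc d} {θ : ℝ} (hθ0 : 0 ≤ θ)
    (hC1 : ∀ t i, ∀ x ∈ Z, ∀ y ∈ Z, dist (F t i x) (F t i y) ≤ θ * dist x y)
    (hC2 : ∀ (i : Fin ℓ), ∀ x ∈ Z, Continuous fun t => F t i x)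
    {g : Ω → Euc d} (hg : Continuous g) (hgZ : ∀ t, g t ∈ Z) (i : Fin ℓ) :
    Continuous fun t => F t i (g t) := by
  rw [continuous_iff_continuousAt]
  intro t₀
  rw [Metric.continuousAt_iff]
  intro ε hε
  have hθ1 : 0 < θ + 1 := by linarith
  obtain ⟨δ₂, hδ₂, hg₂⟩ := Metric.continuousAt_iff.1 (hg.continuousAt (x := t₀))
    (ε / (2 * (θ + 1))) (by positivity)
  obtain ⟨δ₁, hδ₁, hf₁⟩ := Metric.continuousAt_iff.1
    ((hC2 i (g t₀) (hgZ t₀)).continuousAt (x := t₀)) (ε / 2) (by positivity)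
  refine ⟨min δ₁ δ₂, lt_min hδ₁ hδ₂, ?_⟩
  intro t ht
  have h1 : dist (F t i (g t)) (F t i (g t₀)) ≤ θ * dist (g t) (g t₀) :=
    hC1 t i _ (hgZ t) _ (hgZ t₀)
  have h2 : dist (g t) (g t₀) < ε / (2 * (θ + 1)) := hg₂ (ht.trans_le (min_le_right _ _))
  have h3 : dist (F t i (g t₀)) (F t₀ i (g t₀)) < ε / 2 := hf₁ (ht.trans_le (min_le_left _ _))
  have h4 : θ * dist (g t) (g t₀) ≤ θ * (ε / (2 * (θ + 1))) :=
    mul_le_mul_of_nonneg_left h2.le hθ0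
  have h5 : θ * (ε / (2 * (θ + 1))) ≤ ε / 2 := by
    calc θ * (ε / (2 * (θ + 1))) = θ * ε / (2 * (θ + 1)) := by ring
      _ ≤ ε / 2 := by
          rw [div_le_div_iff₀ (by positivity) two_pos]
          nlinarith
  calc dist (F t i (g t)) (F t₀ i (g t₀))
      ≤ dist (F t i (g t)) (F t i (g t₀)) + dist (F t i (g t₀)) (F t₀ i (g t₀)) :=
        dist_triangle _ _ _
    _ < ε / 2 + ε / 2 := by
        have := h1.trans (h4.trans h5)
        linarith
    _ = ε := by ring

lemma continuous_param_wordComp {Z : Set (Euc d)}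
    {F : Ω → Fin ℓ → Euc d → Euc d} {θ : ℝ} (hθ0 : 0 ≤ θ)
    (hmaps : ∀ t i, MapsTo (F t i) Z Z)
    (hC1 : ∀ t i, ∀ x ∈ Z, ∀ y ∈ Z, dist (F t i x) (F t i y) ≤ θ * dist x y)
    (hC2 : ∀ (i : Fin ℓ), ∀ x ∈ Z, Continuous fun t => F t i x)
    (w : List (Fin ℓ)) {z₀ : Euc d} (hz₀ : z₀ ∈ Z) :
    Continuous (fun t => wordComp (F t) w z₀) ∧ ∀ t, wordComp (F t) w z₀ ∈ Z := by
  induction w with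
  | nil => exact ⟨continuous_const, fun t => hz₀⟩
  | cons i w ih =>
    refine ⟨?_, fun t => hmaps t i (ih.2 t)⟩
    exact continuous_param_comp hθ0 hC1 hC2 ih.1 ih.2 i

lemma continuous_param_codingMap {Z : Set (Euc d)}
    {F : Ω → Fin ℓ → Euc d → Euc d} {DF : Ω → Fin ℓ → Euc d → Mat d} {θ : ℝ}
    (hθ : θ ∈ Ioo (0:ℝ) 1)
    (hZc : IsCompact Z) (hZne : Z.Nonempty) {U' : Ω → Set (Euc d)}
    (hZU : ∀ t, Z ⊆ U' t)
    (hmaps : ∀ t i, MapsTo (F t i) Z Z)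
    (hder : ∀ t i, ∀ x ∈ U' t, HasFDerivAt (F t i) (matCLM (DF t i x)) x)
    (hC1 : ∀ t i, ∀ x ∈ Z, ∀ y ∈ Z, dist (F t i x) (F t i y) ≤ θ * dist x y)
    (hC2 : ∀ (i : Fin ℓ), ∀ x ∈ Z, Continuous fun t => F t i x)
    (hPi1 : ∀ t (x : Seq ℓ), codingMap (F t) x ∈ Z)
    (hPi2 : ∀ t (x : Seq ℓ),
      Tendsto (fun n => wordComp (F t) (prefixWord x n) 0) atTop (𝓝 (codingMap (F t) x)))
    (x : Seq ℓ) :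
    Continuous fun t => codingMap (F t) x := by
  obtain ⟨z₀, hz₀⟩ := hZne
  have hunif : TendstoUniformly (fun n t => wordComp (F t) (prefixWord x n) z₀)
      (fun t => codingMap (F t) x) atTop := by
    rw [Metric.tendstoUniformly_iff]
    intro ε hε
    have htend : Tendsto (fun n : ℕ => θ ^ n * Metric.diam Z) atTop (𝓝 0) := by
      have := (tendsto_pow_atTop_nhds_zero_of_lt_one hθ.1.le hθ.2).mul_const (Metric.diam Z)
      simpa using this
    filter_upwards [htend.eventually_lt_const hε] with n hn t
    have hx1 : codingMap (F t) x
        = wordComp (F t) (prefixWord x n) (codingMap (F t) (shiftMap^[n] x)) :=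
      codingMap_iterate (hZU t) (hmaps t) (hder t) (hPi1 t) (hPi2 t) x n
    have hd1 : dist (codingMap (F t) x) (wordComp (F t) (prefixWord x n) z₀)
        ≤ θ ^ n * dist (codingMap (F t) (shiftMap^[n] x)) z₀ := by
      rw [hx1]
      have := dist_wordComp_le hθ.1.le (hmaps t) (hC1 t) (prefixWord x n)
        (codingMap (F t) (shiftMap^[n] x)) (hPi1 t _) z₀ hz₀
      simpa [prefixWord] using this
    have hd2 : dist (codingMap (F t) (shiftMap^[n] x)) z₀ ≤ Metric.diam Z :=
      Metric.dist_le_diam_of_mem hZc.isBounded (hPi1 t _) hz₀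
    calc dist (codingMap (F t) x) (wordComp (F t) (prefixWord x n) z₀)
        ≤ θ ^ n * dist (codingMap (F t) (shiftMap^[n] x)) z₀ := hd1
      _ ≤ θ ^ n * Metric.diam Z :=
          mul_le_mul_of_nonneg_left hd2 (pow_nonneg hθ.1.le n)
      _ < ε := hn
  apply hunif.continuous
  apply Filter.Eventually.frequently
  filter_upwards with n
  exact (continuous_param_wordComp hθ.1.le hmaps hC1 hC2 (prefixWord x n) hz₀).1

end Aux4
section Aux5

lemma exp_form_rpow (x s : ℝ) (hx : 0 < x) : x ^ s = Real.exp (s * Real.log x) := by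
  rw [Real.rpow_def_of_pos hx, mul_comm]

lemma exp_form_pow (x : ℝ) (hx : 0 < x) (n : ℕ) : x ^ n = Real.exp ((n : ℝ) * Real.log x) := by
  rw [Real.exp_nat_mul, Real.exp_log hx]

lemma calc_lower (a φk s : ℝ) (ha : 0 < a) (hφ : 0 < φk) (k m : ℕ) :
    (a / 2 ^ (m + 1)) ^ (-s) * ((a / 2 ^ m) ^ (k + 1) / (φk * a))
      = (2 : ℝ) ^ s / (φk * a ^ (s - (k : ℝ))) * ((2 : ℝ) ^ (s - ((k : ℝ) + 1))) ^ m := by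
  have h2 : (0:ℝ) < 2 := two_pos
  have hm1 : (0:ℝ) < a / 2 ^ (m+1) := by positivity
  have hm0 : (0:ℝ) < a / 2 ^ m := by positivity
  have la : Real.log (a / 2 ^ m) = Real.log a - (m : ℝ) * Real.log 2 := by
    rw [Real.log_div ha.ne' (by positivity), Real.log_pow]
  have la1 : Real.log (a / 2 ^ (m+1)) = Real.log a - ((m : ℝ) + 1) * Real.log 2 := by
    rw [Real.log_div ha.ne' (by positivity), Real.log_pow]
    push_cast; ring
  rw [exp_form_rpow _ _ hm1, exp_form_pow _ hm0, exp_form_rpow 2 s h2,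
      exp_form_rpow a (s - (k:ℝ)) ha, exp_form_rpow 2 (s - ((k:ℝ)+1)) h2,
      ← Real.exp_nat_mul, la, la1, mul_div_assoc']
  have key : Real.exp (-s * (Real.log a - ((m:ℝ) + 1) * Real.log 2)) *
        Real.exp ((((k:ℕ) + 1 : ℕ) : ℝ) * (Real.log a - (m:ℝ) * Real.log 2)) *
        Real.exp ((s - (k:ℝ)) * Real.log a)
      = Real.exp (s * Real.log 2) * Real.exp ((m:ℝ) * ((s - ((k:ℝ) + 1)) * Real.log 2)) * a := by
    conv_rhs => rw [← Real.exp_log ha]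
    rw [← Real.exp_add, ← Real.exp_add, ← Real.exp_add, ← Real.exp_add]
    congr 1
    push_cast
    ring
  rw [div_mul_eq_mul_div, div_eq_div_iff (by positivity) (by positivity)]
  linear_combination φk * key

lemma calc_upper (a φk s : ℝ) (ha : 0 < a) (hφ : 0 < φk) (k m : ℕ) :
    (a * 2 ^ m) ^ (-s) * ((a * 2 ^ (m + 1)) ^ k / φk)
      = (2 : ℝ) ^ (k : ℝ) / (φk * a ^ (s - (k : ℝ))) * ((2 : ℝ) ^ ((k : ℝ) - s)) ^ m := by
  have h2 : (0:ℝ) < 2 := two_pos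
  have hm0 : (0:ℝ) < a * 2 ^ m := by positivity
  have hm1 : (0:ℝ) < a * 2 ^ (m+1) := by positivity
  have la : Real.log (a * 2 ^ m) = Real.log a + (m : ℝ) * Real.log 2 := by
    rw [Real.log_mul ha.ne' (by positivity), Real.log_pow]
  have la1 : Real.log (a * 2 ^ (m+1)) = Real.log a + ((m : ℝ) + 1) * Real.log 2 := by
    rw [Real.log_mul ha.ne' (by positivity), Real.log_pow]
    push_cast; ring
  rw [exp_form_rpow _ _ hm0, exp_form_pow _ hm1, exp_form_rpow 2 (k:ℝ) h2,
      exp_form_rpow a (s - (k:ℝ)) ha, exp_form_rpow 2 ((k:ℝ) - s) h2,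
      ← Real.exp_nat_mul, la, la1, mul_div_assoc']
  have key : Real.exp (-s * (Real.log a + (m:ℝ) * Real.log 2)) *
        Real.exp ((k : ℝ) * (Real.log a + ((m:ℝ) + 1) * Real.log 2)) *
        Real.exp ((s - (k:ℝ)) * Real.log a)
      = Real.exp ((k:ℝ) * Real.log 2) * Real.exp ((m:ℝ) * (((k:ℝ) - s) * Real.log 2)) := by
    rw [← Real.exp_add, ← Real.exp_add, ← Real.exp_add]
    congr 1
    ring
  rw [div_mul_eq_mul_div, div_eq_div_iff (by positivity) (by positivity)]
  linear_combination φk * key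

lemma tsum_ofReal_geometric (Kc q : ℝ) (hK : 0 ≤ Kc) (hq0 : 0 ≤ q) (hq1 : q < 1) :
    ∑' m : ℕ, ENNReal.ofReal (Kc * q ^ m) = ENNReal.ofReal (Kc / (1 - q)) := by
  rw [← ENNReal.ofReal_tsum_of_nonneg (fun m => by positivity)
    ((summable_geometric_of_lt_one hq0 hq1).mul_left Kc)]
  congr 1
  rw [tsum_mul_left, tsum_geometric_of_lt_one hq0 hq1, div_eq_mul_inv]

end Aux5
set_option maxHeartbeats 2000000

/-- Lemma 3.2: under the GTC (with constants `δ₀, ψ`), for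
non-integral `0 < s < d`, `t₀ ∈ Ω` and `0 < δ < δ₀`, there is `c > 0` (depending on
`s`, `δ` and `t₀`) such that for all distinct `i, j ∈ Σ`,
`∫_{B(t₀,δ)} |Π^t(i) − Π^t(j)|^{-s} dη(t)
   ≤ c e^{|i∧j| ψ(δ)} (max_{x ∈ Σ} φ^s(D_{Π^{t₀} x} f^{t₀}_{i∧j}))^{-1}`. -/
theorem energy_integral_bound_of_GTC
    {d ℓ : ℕ} (hd : 0 < d) (hℓ : 2 ≤ ℓ)
    {Ω : Type*} [MetricSpace Ω] [TopologicalSpace.SeparableSpace Ω]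
    [MeasurableSpace Ω] [BorelSpace Ω]
    (η : Measure Ω) [IsLocallyFiniteMeasure η]
    (Z U : Set (Euc d))
    (F : Ω → Fin ℓ → Euc d → Euc d) (DF : Ω → Fin ℓ → Euc d → Mat d)
    (hIFS : ∀ t, IsC1IFS Z U (F t) (DF t))
    (θ : ℝ) (hθ : θ ∈ Ioo (0 : ℝ) 1)
    (hC1 : ∀ t i, ∀ x ∈ Z, ∀ y ∈ Z, dist (F t i x) (F t i y) ≤ θ * dist x y)
    (hC2 : ∀ (i : Fin ℓ), ∀ x ∈ Z, Continuous fun t => F t i x)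
    (hPi : ∀ t (x : Seq ℓ), codingMap (F t) x ∈ Z ∧
      Tendsto (fun n => wordComp (F t) (prefixWord x n) (0 : Euc d)) atTop
        (𝓝 (codingMap (F t) x)))
    (δ₀ : ℝ) (ψ : ℝ → ℝ)
    (hGTC : GTCWith F DF Set.univ η δ₀ ψ)
    (s : ℝ) (hs : 0 < s) (hsd : s < d) (hsni : ∀ k : ℤ, s ≠ (k : ℝ))
    (t₀ : Ω) (δ : ℝ) (hδ : δ ∈ Ioo (0 : ℝ) δ₀) :
    ∃ c : ℝ, 0 < c ∧ ∀ i j : Seq ℓ, i ≠ j →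
      (∫⁻ t in closedBall t₀ δ,
          edist (codingMap (F t) i) (codingMap (F t) j) ^ (-s) ∂η) ≤
        ENNReal.ofReal (c * Real.exp ((commonLen i j : ℝ) * ψ δ) *
          (⨆ x : Seq ℓ,
            svf s (wordDeriv (F t₀) (DF t₀) (commonWord i j) (codingMap (F t₀) x)))⁻¹) := by

  classical
  obtain ⟨hδ0pos, hψnn, hψtend, hGTCmain⟩ := hGTC
  obtain ⟨C, hCpos, hGTCbound⟩ := hGTCmain t₀ (Set.mem_univ t₀) δ hδ
  haveI : Nonempty (Fin ℓ) := ⟨⟨0, by omega⟩⟩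
  -- facts about s and k = ⌊s⌋₊
  set k := ⌊s⌋₊ with hkdef
  have hks : (k : ℝ) ≤ s := Nat.floor_le hs.le
  have hsk1 : s < (k : ℝ) + 1 := Nat.lt_floor_add_one s
  have hkd : k < d := by
    have h : (k : ℝ) < (d : ℝ) := lt_of_le_of_lt hks hsd
    exact_mod_cast h
  have hsne : s ≠ (k : ℝ) := by simpa using hsni (k : ℤ)
  have hks' : (k : ℝ) < s := lt_of_le_of_ne hks (Ne.symm hsne)
  set q₁ : ℝ := (2 : ℝ) ^ (s - ((k : ℝ) + 1)) with hq₁def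
  set q₂ : ℝ := (2 : ℝ) ^ ((k : ℝ) - s) with hq₂def
  have hq₁pos : 0 < q₁ := Real.rpow_pos_of_pos two_pos _
  have hq₂pos : 0 < q₂ := Real.rpow_pos_of_pos two_pos _
  have hq₁lt : q₁ < 1 := Real.rpow_lt_one_of_one_lt_of_neg one_lt_two (by linarith)
  have hq₂lt : q₂ < 1 := Real.rpow_lt_one_of_one_lt_of_neg one_lt_two (by linarith)
  set K : ℝ := (2 : ℝ) ^ s / (1 - q₁) + (2 : ℝ) ^ (k : ℝ) / (1 - q₂) with hKdef
  have h2s : (0:ℝ) < (2 : ℝ) ^ s := Real.rpow_pos_of_pos two_pos _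
  have h2k : (0:ℝ) < (2 : ℝ) ^ (k : ℝ) := Real.rpow_pos_of_pos two_pos _
  have hKpos : 0 < K := by
    have h3 := div_pos h2s (by linarith : (0:ℝ) < 1 - q₁)
    have h4 := div_pos h2k (by linarith : (0:ℝ) < 1 - q₂)
    rw [hKdef]; linarith
  -- extract IFS structure
  have hZc : IsCompact Z := (hIFS t₀).1
  have hZne : Z.Nonempty := (hIFS t₀).2.1
  have hZU : Z ⊆ U := (hIFS t₀).2.2.2.1
  have hmaps : ∀ t i0, MapsTo (F t i0) Z Z := fun t i0 => ((hIFS t).2.2.2.2 i0).1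
  have hder : ∀ t i0, ∀ y ∈ U, HasFDerivAt (F t i0) (matCLM (DF t i0 y)) y :=
    fun t i0 => ((hIFS t).2.2.2.2 i0).2.2.2.1
  have hDfle : ∀ t i0, ∀ y ∈ U, opNorm (DF t i0 y) ≤ 1 := by
    intro t i0 y hy
    obtain ⟨ρ, hρ1, hρle⟩ := ((hIFS t).2.2.2.2 i0).2.2.2.2.2.2
    exact (hρle y hy).trans hρ1.le
  have hcont : ∀ x : Seq ℓ, Continuous fun t => codingMap (F t) x := fun x =>
    continuous_param_codingMap hθ hZc hZne (U' := fun _ => U) (fun _ => hZU) hmaps hder hC1 hC2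
      (fun t x => (hPi t x).1) (fun t x => (hPi t x).2) x
  refine ⟨2 * C * K, by positivity, ?_⟩
  intro i j hij
  set n := commonLen i j with hndef
  set w := commonWord i j with hwdef
  set A : Seq ℓ → Mat d := fun x => wordDeriv (F t₀) (DF t₀) w (codingMap (F t₀) x) with hAdef
  set Φ : ℝ := ⨆ x : Seq ℓ, svf s (A x) with hΦdef
  set e : ℝ := Real.exp ((n : ℝ) * ψ δ) with hedef
  have hepos : 0 < e := Real.exp_pos _
  set D : Ω → ℝ := fun t => dist (codingMap (F t) i) (codingMap (F t) j) with hDdef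
  have hGTC' : ∀ r : ℝ, 0 < r → η {t | t ∈ closedBall t₀ δ ∧ D t < r}
      ≤ ENNReal.ofReal (C * e * Zfun (F t₀) (DF t₀) w r) := fun r hr =>
    hGTCbound i j hij r hr
  have hDcont : Continuous D := (hcont i).dist (hcont j)
  set B := closedBall t₀ δ with hBdef
  have hBmeas : MeasurableSet B := measurableSet_closedBall
  set T : ℝ → Set Ω := fun r => {t | D t < r} with hTdef
  have hTmeas : ∀ r, MeasurableSet (T r) :=
    fun r => measurableSet_lt hDcont.measurable measurable_const
  have hμT : ∀ r : ℝ, 0 < r → (η.restrict B) (T r)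
      ≤ ENNReal.ofReal (C * e * Zfun (F t₀) (DF t₀) w r) := by
    intro r hr
    rw [Measure.restrict_apply (hTmeas r)]
    have hseteq : T r ∩ B = {t | t ∈ closedBall t₀ δ ∧ D t < r} := by
      ext t; simp [hTdef, hBdef, and_comm]
    rw [hseteq]
    exact hGTC' r hr
  have hopA : ∀ x : Seq ℓ, opNorm (A x) ≤ 1 := fun x =>
    opNorm_wordDeriv_le hd hZU (hmaps t₀) (hDfle t₀) w _ (hPi t₀ x).1
  have hbdd : BddAbove (Set.range fun x : Seq ℓ => svf s (A x)) := by
    refine ⟨1, ?_⟩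
    rintro _ ⟨x, rfl⟩
    exact svf_le_one hs.le _ (hopA x)
  by_cases hcase : ∀ x : Seq ℓ, svf s (A x) ≤ 0
  · -- degenerate case: all svf vanish, so η B = 0
    have hZfun0 : ∀ r : ℝ, 0 < r → Zfun (F t₀) (DF t₀) w r ≤ 0 := by
      intro r hr
      set x : Seq ℓ := fun _ => ⟨0, by omega⟩ with hxdef
      have hsvf0 : svf s (A x) = 0 := le_antisymm (hcase x) (svf_nonneg _ _)
      have hsplit := svf_split (A x) hs hsd hkd
      have hprod0 : svf ((k : ℕ) : ℝ) (A x) * singVals (A x) ⟨k, hkd⟩ ^ (s - (k : ℝ)) = 0 := by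
        rw [← hsplit]; exact hsvf0
      have hsucc0 : svf ((k + 1 : ℕ) : ℝ) (A x) = 0 := by
        rw [svf_succ (A x) hd k hkd]
        rcases mul_eq_zero.mp hprod0 with h | h
        · rw [h, zero_mul]
        · have ha0 : singVals (A x) ⟨k, hkd⟩ = 0 := by
            by_contra hne
            have hpos : 0 < singVals (A x) ⟨k, hkd⟩ :=
              lt_of_le_of_ne (singVals_nonneg _ _) (Ne.symm hne)
            exact absurd h (ne_of_gt (Real.rpow_pos_of_pos hpos _))
          rw [ha0, mul_zero]
      have hZle := Zfun_le (F t₀) (DF t₀) w hr.le x (⟨k + 1, by omega⟩ : Fin (d + 1))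
      rw [show (((⟨k + 1, by omega⟩ : Fin (d + 1)) : ℕ) : ℝ) = ((k + 1 : ℕ) : ℝ) from rfl] at hZle
      rw [hsucc0, div_zero] at hZle
      exact hZle
    have hη0 : ∀ m : ℕ, η {t | t ∈ closedBall t₀ δ ∧ D t < ((m : ℝ) + 1)} = 0 := by
      intro m
      refine le_antisymm ?_ zero_le
      refine (hGTC' ((m : ℝ) + 1) (by positivity)).trans ?_
      have hZ := hZfun0 ((m : ℝ) + 1) (by positivity)
      have hce : 0 ≤ C * e := by positivity
      have hle : C * e * Zfun (F t₀) (DF t₀) w ((m : ℝ) + 1) ≤ 0 := by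
        first
          | exact mul_nonpos_iff.mpr (Or.inl ⟨hce, hZ⟩)
          | exact mul_nonpos_iff.mpr (Or.inr ⟨hce, hZ⟩)
      rw [ENNReal.ofReal_of_nonpos hle]
    have hB0 : η B = 0 := by
      have hsub : B ⊆ ⋃ m : ℕ, {t | t ∈ closedBall t₀ δ ∧ D t < ((m : ℝ) + 1)} := by
        intro t ht
        obtain ⟨m, hm⟩ := exists_nat_gt (D t)
        exact Set.mem_iUnion.mpr ⟨m, ht, by push_cast; linarith⟩
      refine le_antisymm ?_ zero_le
      calc η B ≤ η (⋃ m : ℕ, {t | t ∈ closedBall t₀ δ ∧ D t < ((m : ℝ) + 1)}) :=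
            measure_mono hsub
        _ ≤ ∑' m : ℕ, η {t | t ∈ closedBall t₀ δ ∧ D t < ((m : ℝ) + 1)} :=
            measure_iUnion_le _
        _ = 0 := by simp only [hη0, tsum_zero]
    rw [setLIntegral_measure_zero _ _ hB0]
    exact zero_le
  · push_neg at hcase
    obtain ⟨x₀, hx₀⟩ := hcase
    have hΦpos : 0 < Φ := lt_of_lt_of_le hx₀ (le_ciSup hbdd x₀)
    obtain ⟨xs, hxs⟩ := exists_lt_of_lt_ciSup (show Φ / 2 < Φ by linarith)
    set P := svf s (A xs) with hPdef
    have hPpos : 0 < P := by linarith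
    set a := singVals (A xs) ⟨k, hkd⟩ with hadef
    set φk := svf ((k : ℕ) : ℝ) (A xs) with hφkdef
    have hPsplit : P = φk * a ^ (s - (k : ℝ)) := svf_split (A xs) hs hsd hkd
    have hann : 0 ≤ a := singVals_nonneg _ _
    have hapos : 0 < a := by
      rcases eq_or_lt_of_le hann with h | h
      · exfalso
        rw [hPsplit, ← h, Real.zero_rpow (sub_ne_zero.mpr hsne), mul_zero] at hPpos
        exact lt_irrefl _ hPpos
      · exact h
    have hφkpos : 0 < φk := by
      have hrp : 0 < a ^ (s - (k : ℝ)) := Real.rpow_pos_of_pos hapos _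
      nlinarith [svf_nonneg ((k : ℕ) : ℝ) (A xs)]
    set φk1 := svf ((k + 1 : ℕ) : ℝ) (A xs) with hφk1def
    have hφk1eq : φk1 = φk * a := svf_succ (A xs) hd k hkd
    -- Z-function bounds at the dyadic scales
    have hzb1 : ∀ m : ℕ, Zfun (F t₀) (DF t₀) w (a / 2 ^ m) ≤ (a / 2 ^ m) ^ (k + 1) / φk1 := by
      intro m
      have h := Zfun_le (F t₀) (DF t₀) w (r := a / 2 ^ m) (by positivity) xs
        (⟨k + 1, by omega⟩ : Fin (d + 1))
      exact h
    have hzb2 : ∀ m : ℕ, Zfun (F t₀) (DF t₀) w (a * 2 ^ (m + 1))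
        ≤ (a * 2 ^ (m + 1)) ^ k / φk := by
      intro m
      have h := Zfun_le (F t₀) (DF t₀) w (r := a * 2 ^ (m + 1)) (by positivity) xs
        (⟨k, by omega⟩ : Fin (d + 1))
      exact h
    -- the two dominating functions
    set g₁ : Ω → ℝ≥0∞ := fun t => ∑' m : ℕ,
      (T (a / 2 ^ m)).indicator (fun _ => ENNReal.ofReal ((a / 2 ^ (m + 1)) ^ (-s))) t with hg₁def
    set g₂ : Ω → ℝ≥0∞ := fun t => ∑' m : ℕ,
      (T (a * 2 ^ (m + 1))).indicator (fun _ => ENNReal.ofReal ((a * 2 ^ m) ^ (-s))) t with hg₂def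
    -- pointwise bound
    have hpoint : ∀ t : Ω, edist (codingMap (F t) i) (codingMap (F t) j) ^ (-s)
        ≤ g₁ t + g₂ t := by
      intro t
      have hed : edist (codingMap (F t) i) (codingMap (F t) j) = ENNReal.ofReal (D t) :=
        edist_dist _ _
      rcases lt_or_ge (D t) a with hDa | hDa
      · rcases eq_or_lt_of_le (dist_nonneg : 0 ≤ D t) with hD0 | hD0
        · -- D t = 0
          have hmem : ∀ m : ℕ, t ∈ T (a / 2 ^ m) := by
            intro m
            show D t < a / 2 ^ m
            exact hD0.symm.trans_lt (by positivity)
          have hgtop : g₁ t = ⊤ := by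
            show (∑' m : ℕ, (T (a / 2 ^ m)).indicator
                (fun _ => ENNReal.ofReal ((a / 2 ^ (m + 1)) ^ (-s))) t) = ⊤
            have heq : ∀ m : ℕ, (T (a / 2 ^ m)).indicator
                (fun _ => ENNReal.ofReal ((a / 2 ^ (m + 1)) ^ (-s))) t
                = ENNReal.ofReal ((a / 2 ^ (m + 1)) ^ (-s)) := fun m =>
              Set.indicator_of_mem (hmem m) _
            rw [tsum_congr heq]
            refine top_le_iff.mp ?_
            have hge : ∀ m : ℕ, ENNReal.ofReal (a ^ (-s))
                ≤ ENNReal.ofReal ((a / 2 ^ (m + 1)) ^ (-s)) := by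
              intro m
              apply ENNReal.ofReal_le_ofReal
              apply Real.rpow_le_rpow_of_nonpos (by positivity) ?_ (by linarith)
              exact div_le_self hann (one_le_pow₀ (by norm_num : (1:ℝ) ≤ 2))
            calc (⊤ : ℝ≥0∞) = ∑' _ : ℕ, ENNReal.ofReal (a ^ (-s)) :=
                  (ENNReal.tsum_const_eq_top_of_ne_zero (by
                    simp only [ne_eq, ENNReal.ofReal_eq_zero, not_le]
                    positivity)).symm
              _ ≤ _ := ENNReal.tsum_le_tsum hge
          have htop : g₁ t + g₂ t = ⊤ := by simp [hgtop]
          rw [htop]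
          exact le_top
        · -- 0 < D t < a
          have hex : ∃ m : ℕ, a / 2 ^ (m + 1) ≤ D t := by
            obtain ⟨m, hm⟩ := exists_pow_lt_of_lt_one (div_pos hD0 hapos)
              (by norm_num : (1 : ℝ) / 2 < 1)
            refine ⟨m, ?_⟩
            have h1 : a * ((1:ℝ)/2) ^ m < a * (D t / a) :=
              mul_lt_mul_of_pos_left hm hapos
            rw [mul_div_cancel₀ _ hapos.ne'] at h1
            have h2 : a / 2 ^ (m + 1) ≤ a / 2 ^ m := by
              rw [div_le_div_iff₀ (by positivity) (by positivity), pow_succ]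
              have hp : (0:ℝ) < 2 ^ m := by positivity
              have h2m : (2:ℝ) ^ m ≤ 2 ^ m * 2 := by nlinarith
              exact mul_le_mul_of_nonneg_left h2m hann
            have h3 : a * ((1:ℝ)/2) ^ m = a / 2 ^ m := by
              rw [div_pow, one_pow]
              ring
            linarith
          set m₀ := Nat.find hex with hm₀def
          have hfind1 : a / 2 ^ (m₀ + 1) ≤ D t := Nat.find_spec hex
          have hfind2 : D t < a / 2 ^ m₀ := by
            rcases Nat.eq_zero_or_pos m₀ with h | h
            · rw [h]; simpa using hDa
            · obtain ⟨l, hl⟩ : ∃ l, m₀ = l + 1 := ⟨m₀ - 1, by omega⟩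
              have := Nat.find_min hex (show l < m₀ by omega)
              rw [not_le] at this
              rw [hl]
              exact this
          have hLle : ENNReal.ofReal (D t) ^ (-s)
              ≤ ENNReal.ofReal ((a / 2 ^ (m₀ + 1)) ^ (-s)) := by
            rw [ENNReal.ofReal_rpow_of_pos hD0]
            exact ENNReal.ofReal_le_ofReal
              (Real.rpow_le_rpow_of_nonpos (by positivity) hfind1 (by linarith))
          rw [hed]
          refine hLle.trans (le_trans ?_ le_self_add)
          rw [hg₁def]
          have hmem : t ∈ T (a / 2 ^ m₀) := hfind2
          calc ENNReal.ofReal ((a / 2 ^ (m₀ + 1)) ^ (-s))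
              = (T (a / 2 ^ m₀)).indicator
                  (fun _ => ENNReal.ofReal ((a / 2 ^ (m₀ + 1)) ^ (-s))) t :=
                (Set.indicator_of_mem hmem
                  (fun _ => ENNReal.ofReal ((a / 2 ^ (m₀ + 1)) ^ (-s)))).symm
            _ ≤ _ := ENNReal.le_tsum m₀
      · -- a ≤ D t
        have hD0 : 0 < D t := lt_of_lt_of_le hapos hDa
        have hex : ∃ m : ℕ, D t < a * 2 ^ (m + 1) := by
          obtain ⟨m, hm⟩ := pow_unbounded_of_one_lt (D t / a) (by norm_num : (1:ℝ) < 2)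
          refine ⟨m, ?_⟩
          have h1 : a * (D t / a) < a * 2 ^ m := mul_lt_mul_of_pos_left hm hapos
          rw [mul_div_cancel₀ _ hapos.ne'] at h1
          have h2 : a * 2 ^ m ≤ a * 2 ^ (m + 1) := by
            apply mul_le_mul_of_nonneg_left _ hann
            exact pow_le_pow_right₀ (by norm_num) (by omega)
          linarith
        set m₁ := Nat.find hex with hm₁def
        have hfind1 : D t < a * 2 ^ (m₁ + 1) := Nat.find_spec hex
        have hfind2 : a * 2 ^ m₁ ≤ D t := by
          rcases Nat.eq_zero_or_pos m₁ with h | h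
          · rw [h]; simpa using hDa
          · obtain ⟨l, hl⟩ : ∃ l, m₁ = l + 1 := ⟨m₁ - 1, by omega⟩
            have := Nat.find_min hex (show l < m₁ by omega)
            rw [not_lt] at this
            rw [hl]
            exact this
        have hLle : ENNReal.ofReal (D t) ^ (-s)
            ≤ ENNReal.ofReal ((a * 2 ^ m₁) ^ (-s)) := by
          rw [ENNReal.ofReal_rpow_of_pos hD0]
          exact ENNReal.ofReal_le_ofReal
            (Real.rpow_le_rpow_of_nonpos (by positivity) hfind2 (by linarith))
        rw [hed]
        refine hLle.trans (le_trans ?_ le_add_self)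
        rw [hg₂def]
        have hmem : t ∈ T (a * 2 ^ (m₁ + 1)) := hfind1
        calc ENNReal.ofReal ((a * 2 ^ m₁) ^ (-s))
            = (T (a * 2 ^ (m₁ + 1))).indicator
                (fun _ => ENNReal.ofReal ((a * 2 ^ m₁) ^ (-s))) t :=
              (Set.indicator_of_mem hmem
                (fun _ => ENNReal.ofReal ((a * 2 ^ m₁) ^ (-s)))).symm
          _ ≤ _ := ENNReal.le_tsum m₁
    -- measurability
    have hg₁meas : Measurable g₁ :=
      Measurable.ennreal_tsum fun m => measurable_const.indicator (hTmeas _)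
    -- bound the two integrals
    have hI1 : ∫⁻ t in B, g₁ t ∂η
        ≤ ENNReal.ofReal (C * e * ((2:ℝ) ^ s / P) / (1 - q₁)) := by
      have hrw : (∫⁻ t in B, g₁ t ∂η) = ∑' m : ℕ, ∫⁻ t in B, (T (a / 2 ^ m)).indicator
          (fun _ => ENNReal.ofReal ((a / 2 ^ (m + 1)) ^ (-s))) t ∂η := by
        rw [← lintegral_tsum fun m => (measurable_const.indicator (hTmeas _)).aemeasurable]
      rw [hrw]
      have hterm : ∀ m : ℕ, (∫⁻ t in B, (T (a / 2 ^ m)).indicator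
            (fun _ => ENNReal.ofReal ((a / 2 ^ (m + 1)) ^ (-s))) t ∂η)
          ≤ ENNReal.ofReal (C * e * ((2:ℝ) ^ s / P) * q₁ ^ m) := by
        intro m
        rw [lintegral_indicator (hTmeas _), setLIntegral_const]
        calc ENNReal.ofReal ((a / 2 ^ (m + 1)) ^ (-s)) * (η.restrict B) (T (a / 2 ^ m))
            ≤ ENNReal.ofReal ((a / 2 ^ (m + 1)) ^ (-s)) *
              ENNReal.ofReal (C * e * Zfun (F t₀) (DF t₀) w (a / 2 ^ m)) :=
              mul_le_mul_right (hμT _ (by positivity)) _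
          _ ≤ ENNReal.ofReal ((a / 2 ^ (m + 1)) ^ (-s) *
                (C * e * ((a / 2 ^ m) ^ (k + 1) / φk1))) := by
              rw [← ENNReal.ofReal_mul (by positivity)]
              apply ENNReal.ofReal_le_ofReal
              apply mul_le_mul_of_nonneg_left _ (by positivity)
              exact mul_le_mul_of_nonneg_left (hzb1 m) (by positivity)
          _ = ENNReal.ofReal (C * e * ((2:ℝ) ^ s / P) * q₁ ^ m) := by
              congr 1
              rw [hφk1eq, hPsplit, hq₁def]
              have hc := calc_lower a φk s hapos hφkpos k m
              calc (a / 2 ^ (m + 1)) ^ (-s) * (C * e * ((a / 2 ^ m) ^ (k + 1) / (φk * a)))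
                  = C * e * ((a / 2 ^ (m + 1)) ^ (-s) *
    ((a / 2 ^ m) ^ (k + 1) / (φk * a))) := by ring
                _ = C * e * ((2:ℝ) ^ s / (φk * a ^ (s - (k:ℝ))) *
                      ((2:ℝ) ^ (s - ((k:ℝ) + 1))) ^ m) := by rw [hc]
                _ = _ := by ring
      calc (∑' m : ℕ, ∫⁻ t in B, (T (a / 2 ^ m)).indicator
              (fun _ => ENNReal.ofReal ((a / 2 ^ (m + 1)) ^ (-s))) t ∂η)
          ≤ ∑' m : ℕ, ENNReal.ofReal (C * e * ((2:ℝ) ^ s / P) * q₁ ^ m) :=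
            ENNReal.tsum_le_tsum hterm
        _ = ENNReal.ofReal (C * e * ((2:ℝ) ^ s / P) / (1 - q₁)) :=
            tsum_ofReal_geometric _ _ (by positivity) hq₁pos.le hq₁lt
    have hI2 : ∫⁻ t in B, g₂ t ∂η
        ≤ ENNReal.ofReal (C * e * ((2:ℝ) ^ (k:ℝ) / P) / (1 - q₂)) := by
      have hrw : (∫⁻ t in B, g₂ t ∂η) = ∑' m : ℕ, ∫⁻ t in B, (T (a * 2 ^ (m + 1))).indicator
          (fun _ => ENNReal.ofReal ((a * 2 ^ m) ^ (-s))) t ∂η := by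
        rw [← lintegral_tsum fun m => (measurable_const.indicator (hTmeas _)).aemeasurable]
      rw [hrw]
      have hterm : ∀ m : ℕ, (∫⁻ t in B, (T (a * 2 ^ (m + 1))).indicator
            (fun _ => ENNReal.ofReal ((a * 2 ^ m) ^ (-s))) t ∂η)
          ≤ ENNReal.ofReal (C * e * ((2:ℝ) ^ (k:ℝ) / P) * q₂ ^ m) := by
        intro m
        rw [lintegral_indicator (hTmeas _), setLIntegral_const]
        calc ENNReal.ofReal ((a * 2 ^ m) ^ (-s)) * (η.restrict B) (T (a * 2 ^ (m + 1)))
            ≤ ENNReal.ofReal ((a * 2 ^ m) ^ (-s)) *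
              ENNReal.ofReal (C * e * Zfun (F t₀) (DF t₀) w (a * 2 ^ (m + 1))) :=
              mul_le_mul_right (hμT _ (by positivity)) _
          _ ≤ ENNReal.ofReal ((a * 2 ^ m) ^ (-s) *
                (C * e * ((a * 2 ^ (m + 1)) ^ k / φk))) := by
              rw [← ENNReal.ofReal_mul (by positivity)]
              apply ENNReal.ofReal_le_ofReal
              apply mul_le_mul_of_nonneg_left _ (by positivity)
              exact mul_le_mul_of_nonneg_left (hzb2 m) (by positivity)
          _ = ENNReal.ofReal (C * e * ((2:ℝ) ^ (k:ℝ) / P) * q₂ ^ m) := by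
              congr 1
              rw [hPsplit, hq₂def]
              have hc := calc_upper a φk s hapos hφkpos k m
              calc (a * 2 ^ m) ^ (-s) * (C * e * ((a * 2 ^ (m + 1)) ^ k / φk))
                  = C * e * ((a * 2 ^ m) ^ (-s) * ((a * 2 ^ (m + 1)) ^ k / φk)) := by ring
                _ = C * e * ((2:ℝ) ^ (k:ℝ) / (φk * a ^ (s - (k:ℝ))) *
                      ((2:ℝ) ^ ((k:ℝ) - s)) ^ m) := by rw [hc]
                _ = _ := by ring
      calc (∑' m : ℕ, ∫⁻ t in B, (T (a * 2 ^ (m + 1))).indicator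
              (fun _ => ENNReal.ofReal ((a * 2 ^ m) ^ (-s))) t ∂η)
          ≤ ∑' m : ℕ, ENNReal.ofReal (C * e * ((2:ℝ) ^ (k:ℝ) / P) * q₂ ^ m) :=
            ENNReal.tsum_le_tsum hterm
        _ = ENNReal.ofReal (C * e * ((2:ℝ) ^ (k:ℝ) / P) / (1 - q₂)) :=
            tsum_ofReal_geometric _ _ (by positivity) hq₂pos.le hq₂lt
    -- final combination
    have hPinv : P⁻¹ ≤ 2 * Φ⁻¹ := by
      calc P⁻¹ ≤ (Φ / 2)⁻¹ := by
            apply inv_anti₀ (by linarith) (by linarith)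
        _ = 2 * Φ⁻¹ := by
            rw [inv_div, div_eq_mul_inv]
    have hfinal : C * e * ((2:ℝ) ^ s / P) / (1 - q₁) + C * e * ((2:ℝ) ^ (k:ℝ) / P) / (1 - q₂)
        ≤ 2 * C * K * e * Φ⁻¹ := by
      have hLHSeq : C * e * ((2:ℝ) ^ s / P) / (1 - q₁) + C * e * ((2:ℝ) ^ (k:ℝ) / P) / (1 - q₂)
          = (C * e * K) * P⁻¹ := by
        rw [hKdef]
        ring
      rw [hLHSeq]
      calc (C * e * K) * P⁻¹ ≤ (C * e * K) * (2 * Φ⁻¹) :=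
            mul_le_mul_of_nonneg_left hPinv (by positivity)
        _ = 2 * C * K * e * Φ⁻¹ := by ring
    have hΦeq : (⨆ x : Seq ℓ, svf s (wordDeriv (F t₀) (DF t₀) w (codingMap (F t₀) x))) = Φ :=
      rfl
    calc (∫⁻ t in B, edist (codingMap (F t) i) (codingMap (F t) j) ^ (-s) ∂η)
        ≤ ∫⁻ t in B, (g₁ t + g₂ t) ∂η := lintegral_mono hpoint
      _ = (∫⁻ t in B, g₁ t ∂η) + ∫⁻ t in B, g₂ t ∂η := lintegral_add_left hg₁meas _
      _ ≤ ENNReal.ofReal (C * e * ((2:ℝ) ^ s / P) / (1 - q₁))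
            + ENNReal.ofReal (C * e * ((2:ℝ) ^ (k:ℝ) / P) / (1 - q₂)) := add_le_add hI1 hI2
      _ = ENNReal.ofReal (C * e * ((2:ℝ) ^ s / P) / (1 - q₁)
            + C * e * ((2:ℝ) ^ (k:ℝ) / P) / (1 - q₂)) := by
          rw [← ENNReal.ofReal_add (le_of_lt (div_pos (by positivity) (by linarith)))
            (le_of_lt (div_pos (by positivity) (by linarith)))]
      _ ≤ ENNReal.ofReal (2 * C * K * e * Φ⁻¹) := ENNReal.ofReal_le_ofReal hfinal
      _ = ENNReal.ofReal (2 * C * K * Real.exp ((n:ℝ) * ψ δ) * Φ⁻¹) := by rw [hedef]
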